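/- arXiv:0903.1689 — 2 statements merged into one kernel-verified Lean document; each statement's English description precedes it below -/
import Mathlib

section
/- For every integer k ≥ 0, the Laurent polynomial Y⁻¹t⁻¹·[(I − Yt)·Q_{3k+1}(t)·Yt + (YX)^{3k+2}·t^{6k+4}]·(I − Xt) is twin. -/
/-- The image of (123) under the irreducible 3-dimensional integral representation of A₄. -/
def Xm : Matrix (Fin 3) (Fin 3) ℤ := !![-1, 1, 0; -1, 0, 0; -1, 0, 1]

/-- The image of (142) under the irreducible 3-dimensional integral representation of A₄. -/
def Ym : Matrix (Fin 3) (Fin 3) ℤ := !![0, 0, -1; 0, 1, -1; 1, 0, -1]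

/-- The inverse of `Xm`, which equals `Xm ^ 2`. -/
def Xinv : Matrix (Fin 3) (Fin 3) ℤ := Xm ^ 2

/-- The inverse of `Ym`, which equals `Ym ^ 2`. -/
def Yinv : Matrix (Fin 3) (Fin 3) ℤ := Ym ^ 2

open LaurentPolynomial Finset

/-- 3×3 integer matrices. -/
abbrev M3 : Type := Matrix (Fin 3) (Fin 3) ℤ

/-- Laurent polynomials in `t` with coefficients in `M3`. -/
abbrev L : Type := LaurentPolynomial M3

/-- A Laurent polynomial `f = ∑ d_j t^j` with 3×3 integer matrix coefficients is *twin* if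
`d_j = c_j I + c_j' (XYX)` for `j ≡ 0 (mod 3)`, `d_j = a_j (X+Y)` for `j ≡ 1 (mod 3)`,
`d_j = b_j (X⁻¹+Y⁻¹)` for `j ≡ 2 (mod 3)`, and `a_{3j+1} = b_{3j+2}` for all `j`. -/
def IsTwin (f : L) : Prop :=
  ∃ c c' a b : ℤ → ℤ,
    (∀ j : ℤ, j % 3 = 0 → f.coeff j = c j • (1 : M3) + c' j • (Xm * Ym * Xm)) ∧
    (∀ j : ℤ, j % 3 = 1 → f.coeff j = a j • (Xm + Ym)) ∧
    (∀ j : ℤ, j % 3 = 2 → f.coeff j = b j • (Xinv + Yinv)) ∧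
    (∀ j : ℤ, a (3 * j + 1) = b (3 * j + 2))

/-- `Q m = ∑_{i=0}^m (YX)^i t^{2i}` for `m ≥ 0` and
`Q (-m) = ∑_{i=1}^m (X⁻¹Y⁻¹)^i t^{-2i}` for `m ≥ 1`. -/
noncomputable def Q (m : ℤ) : L :=
  if 0 ≤ m then ∑ i ∈ Finset.range (m.toNat + 1), C ((Ym * Xm) ^ i) * T (2 * (i : ℤ))
  else ∑ i ∈ Finset.range (-m).toNat, C ((Xinv * Yinv) ^ (i + 1)) * T (-(2 * ((i : ℤ) + 1)))

/- ### auxiliary machinery -/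

noncomputable def CT (M : M3) (n : ℤ) : L := C M * T n

lemma C_mul_T_eq (M : M3) (n : ℤ) : C M * T n = CT M n := rfl

lemma one_eq_CT : (1 : L) = CT 1 0 := by simp [CT]

lemma T_eq_CT (n : ℤ) : (T n : L) = CT 1 n := by simp [CT]

lemma CT_mul (M N : M3) (n m : ℤ) : CT M n * CT N m = CT (M * N) (n + m) := by
  unfold CT
  rw [mul_assoc, ← mul_assoc (T n), T_mul, mul_assoc, ← T_add, ← mul_assoc, ← map_mul]

lemma CT_apply (M : M3) (n j : ℤ) : (CT M n).coeff j = if n = j then M else 0 := by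
  rw [CT, ← single_eq_C_mul_T, AddMonoidAlgebra.coeff_single]; exact Finsupp.single_apply

lemma L_add_apply (f g : L) (j : ℤ) : (f + g).coeff j = f.coeff j + g.coeff j := rfl

lemma L_sub_apply (f g : L) (j : ℤ) : (f - g).coeff j = f.coeff j - g.coeff j := rfl

lemma Tmul_apply (m : ℤ) (f : L) (j : ℤ) : ((T m * f : L)).coeff j = f.coeff (-m + j) := by
  have h : (T m : L) = AddMonoidAlgebra.single m 1 := rfl
  rw [h, AddMonoidAlgebra.coeff_single_mul_apply, one_mul]

/-- basic twin building block of degrees 0..3. -/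
noncomputable def blk (c c' a e e' : ℤ) : L :=
  CT (c • (1 : M3) + c' • (Xm * Ym * Xm)) 0 + CT (a • (Xm + Ym)) 1
    + CT (a • (Xinv + Yinv)) 2 + CT (e • (1 : M3) + e' • (Xm * Ym * Xm)) 3

lemma blk_apply (c c' a e e' : ℤ) (j : ℤ) :
    (blk c c' a e e').coeff j =
      if j = 0 then c • (1 : M3) + c' • (Xm * Ym * Xm)
      else if j = 1 then a • (Xm + Ym)
      else if j = 2 then a • (Xinv + Yinv)
      else if j = 3 then e • (1 : M3) + e' • (Xm * Ym * Xm)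
      else 0 := by
  have : (blk c c' a e e').coeff j =
      (CT (c • (1 : M3) + c' • (Xm * Ym * Xm)) 0).coeff j + (CT (a • (Xm + Ym)) 1).coeff j
      + (CT (a • (Xinv + Yinv)) 2).coeff j + (CT (e • (1 : M3) + e' • (Xm * Ym * Xm)) 3).coeff j := rfl
  rw [this]
  simp only [CT_apply]
  split_ifs <;> first | omega | simp


lemma blk_twin (c c' a e e' : ℤ) : IsTwin (blk c c' a e e') := by
  refine ⟨fun j => if j = 0 then c else if j = 3 then e else 0,
    fun j => if j = 0 then c' else if j = 3 then e' else 0,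
    fun j => if j = 1 then a else 0,
    fun j => if j = 2 then a else 0, ?_, ?_, ?_, ?_⟩
  · intro j hj
    rw [blk_apply]
    rcases eq_or_ne j 0 with rfl | h0
    · simp
    rcases eq_or_ne j 3 with rfl | h3
    · norm_num
    simp [h0, h3, show j ≠ 1 by omega, show j ≠ 2 by omega]
  · intro j hj
    rw [blk_apply]
    rcases eq_or_ne j 1 with rfl | h1
    · norm_num
    simp [h1, show j ≠ 0 by omega, show j ≠ 2 by omega, show j ≠ 3 by omega]
  · intro j hj
    rw [blk_apply]
    rcases eq_or_ne j 2 with rfl | h2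
    · norm_num
    simp [h2, show j ≠ 0 by omega, show j ≠ 1 by omega, show j ≠ 3 by omega]
  · intro j
    rcases eq_or_ne j 0 with rfl | h0
    · norm_num
    · simp [show 3 * j + 1 ≠ 1 by omega, show 3 * j + 2 ≠ 2 by omega]

lemma IsTwin.add {f g : L} (hf : IsTwin f) (hg : IsTwin g) : IsTwin (f + g) := by
  obtain ⟨c1, c1', a1, b1, h10, h11, h12, h13⟩ := hf
  obtain ⟨c2, c2', a2, b2, h20, h21, h22, h23⟩ := hg
  refine ⟨c1 + c2, c1' + c2', a1 + a2, b1 + b2, ?_, ?_, ?_, ?_⟩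
  · intro j hj
    have : (f + g).coeff j = f.coeff j + g.coeff j := Finsupp.add_apply f.coeff g.coeff j
    rw [this, h10 j hj, h20 j hj]
    simp only [Pi.add_apply, add_smul]
    abel
  · intro j hj
    have : (f + g).coeff j = f.coeff j + g.coeff j := Finsupp.add_apply f.coeff g.coeff j
    rw [this, h11 j hj, h21 j hj]
    simp only [Pi.add_apply, add_smul]
  · intro j hj
    have : (f + g).coeff j = f.coeff j + g.coeff j := Finsupp.add_apply f.coeff g.coeff j
    rw [this, h12 j hj, h22 j hj]
    simp only [Pi.add_apply, add_smul]
  · intro j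
    simp [h13 j, h23 j]

lemma IsTwin.Tmul {f : L} (n : ℤ) (hf : IsTwin f) : IsTwin (T (3 * n) * f) := by
  obtain ⟨c1, c1', a1, b1, h10, h11, h12, h13⟩ := hf
  refine ⟨fun j => c1 (-(3 * n) + j), fun j => c1' (-(3 * n) + j),
    fun j => a1 (-(3 * n) + j), fun j => b1 (-(3 * n) + j), ?_, ?_, ?_, ?_⟩
  · intro j hj
    rw [Tmul_apply, h10 _ (by omega)]
  · intro j hj
    rw [Tmul_apply, h11 _ (by omega)]
  · intro j hj
    rw [Tmul_apply, h12 _ (by omega)]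
  · intro j
    have h := h13 (j - n)
    have e1 : -(3 * n) + (3 * j + 1) = 3 * (j - n) + 1 := by ring
    have e2 : -(3 * n) + (3 * j + 2) = 3 * (j - n) + 2 := by ring
    show a1 (-(3 * n) + (3 * j + 1)) = b1 (-(3 * n) + (3 * j + 2))
    rw [e1, e2, h]

/-- the repeating middle block. -/
noncomputable def dlt : L := blk 0 (-1) (-1) 0 0 + T 3 * blk 2 0 (-1) 0 (-1)

lemma dlt_twin : IsTwin dlt := by
  refine (blk_twin _ _ _ _ _).add ?_
  have := (blk_twin 2 0 (-1) 0 (-1)).Tmul 1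
  simpa using this

lemma twin_zero : IsTwin (0 : L) :=
  ⟨0, 0, 0, 0, by simp [Finsupp.zero_apply], by simp [Finsupp.zero_apply],
    by simp [Finsupp.zero_apply], fun _ => rfl⟩

noncomputable def fP (k : ℕ) : L :=
  C Yinv * T (-1) *
      ((1 - C Ym * T 1) * Q (3 * k + 1) * (C Ym * T 1)
        + C ((Ym * Xm) ^ (3 * k + 2)) * T (6 * k + 4)) *
      (1 - C Xm * T 1)

lemma Q_nat (n : ℕ) : Q n = ∑ i ∈ Finset.range (n + 1), CT ((Ym * Xm) ^ i) (2 * i) := by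
  rw [Q, if_pos (by positivity)]
  simp [CT]

lemma pow3 : (Ym * Xm) ^ 3 = 1 := by decide

lemma pow_red (k r : ℕ) : (Ym * Xm) ^ (3 * k + r) = (Ym * Xm) ^ r := by
  rw [pow_add, pow_mul, pow3, one_pow, one_mul]

lemma Q_one : Q 1 = CT 1 0 + CT (Ym * Xm) 2 := by
  rw [show (1 : ℤ) = ((1 : ℕ) : ℤ) by norm_num, Q_nat]
  rw [Finset.sum_range_succ, Finset.sum_range_succ, Finset.sum_range_zero]
  norm_num

lemma Q_succ (k : ℕ) : Q (3 * ((k : ℤ) + 1) + 1) = Q (3 * (k : ℤ) + 1)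
    + (CT ((Ym * Xm) ^ 2) (6 * (k : ℤ) + 4) + CT 1 (6 * (k : ℤ) + 6)
        + CT (Ym * Xm) (6 * (k : ℤ) + 8)) := by
  have e1 : (3 : ℤ) * ((k : ℤ) + 1) + 1 = ((3 * k + 4 : ℕ) : ℤ) := by push_cast; ring
  have e2 : (3 : ℤ) * (k : ℤ) + 1 = ((3 * k + 1 : ℕ) : ℤ) := by push_cast; ring
  rw [e1, e2, Q_nat, Q_nat,
    show 3 * k + 4 + 1 = (3 * k + 1 + 1) + 1 + 1 + 1 by ring,
    Finset.sum_range_succ, Finset.sum_range_succ, Finset.sum_range_succ,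
    show 3 * k + 1 + 1 = 3 * k + 2 by ring,
    show 3 * k + 2 + 1 = 3 * (k + 1) by ring]
  rw [pow_red k 2, pow_mul, pow3, one_pow]
  have p4 : (Ym * Xm) ^ (3 * k + 4) = Ym * Xm := by
    rw [show 3 * k + 4 = 3 * (k + 1) + 1 by ring, pow_red, pow_one]
  have d1 : (2 * ((3 * k + 2 : ℕ) : ℤ)) = 6 * (k : ℤ) + 4 := by push_cast; ring
  have d2 : (2 * ((3 * (k + 1) : ℕ) : ℤ)) = 6 * (k : ℤ) + 6 := by push_cast; ring
  have d3 : (2 * ((3 * k + 4 : ℕ) : ℤ)) = 6 * (k : ℤ) + 8 := by push_cast; ring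
  rw [p4, d1, d2, d3]
  abel

set_option maxHeartbeats 2000000 in
lemma base_eq : fP 0 = blk 1 0 (-1) 0 (-1) := by
  rw [fP, show (3 * ((0 : ℕ) : ℤ) + 1) = (1 : ℤ) by norm_num, Q_one,
    show (6 * ((0 : ℕ) : ℤ) + 4) = (4 : ℤ) by norm_num, show 3 * 0 + 2 = 2 from rfl]
  rw [blk]
  simp only [C_mul_T_eq]
  simp only [one_eq_CT, sub_mul, mul_sub, add_mul, mul_add, CT_mul]
  refine LaurentPolynomial.ext fun j => ?_
  simp only [L_add_apply, L_sub_apply, CT_apply]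
  norm_num
  split_ifs <;> first | omega | decide

set_option maxHeartbeats 2000000 in
lemma step_core (k : ℕ) :
    C Yinv * T (-1) *
      ((1 - C Ym * T 1) * (CT ((Ym * Xm) ^ 2) (6 * (k : ℤ) + 4) + CT 1 (6 * (k : ℤ) + 6)
          + CT (Ym * Xm) (6 * (k : ℤ) + 8)) * (C Ym * T 1)
        + (CT ((Ym * Xm) ^ 2) (6 * (k : ℤ) + 10) - CT ((Ym * Xm) ^ 2) (6 * (k : ℤ) + 4))) *
      (1 - C Xm * T 1) = T (6 * (k : ℤ) + 3) * dlt := by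
  rw [dlt, blk, blk]
  simp only [C_mul_T_eq]
  simp only [T_eq_CT]
  simp only [one_eq_CT, sub_mul, mul_sub, add_mul, mul_add, CT_mul]
  refine LaurentPolynomial.ext fun j => ?_
  simp only [L_add_apply, L_sub_apply, CT_apply]
  ring_nf
  split_ifs <;> first | omega | decide

theorem main_eq (k : ℕ) :
    fP k = blk 1 0 (-1) 0 (-1) + ∑ j ∈ Finset.range k, T (6 * (j : ℤ) + 3) * dlt := by
  induction k with
  | zero => simpa using base_eq
  | succ k ih =>
    have hsplit : fP (k + 1) = fP k +
        (C Yinv * T (-1) *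
          ((1 - C Ym * T 1) * (CT ((Ym * Xm) ^ 2) (6 * (k : ℤ) + 4) + CT 1 (6 * (k : ℤ) + 6)
              + CT (Ym * Xm) (6 * (k : ℤ) + 8)) * (C Ym * T 1)
            + (CT ((Ym * Xm) ^ 2) (6 * (k : ℤ) + 10) - CT ((Ym * Xm) ^ 2) (6 * (k : ℤ) + 4))) *
          (1 - C Xm * T 1)) := by
      rw [fP, fP]
      have e3 : (Ym * Xm) ^ (3 * (k + 1) + 2) = (Ym * Xm) ^ 2 := pow_red (k + 1) 2
      have e5 : (Ym * Xm) ^ (3 * k + 2) = (Ym * Xm) ^ 2 := pow_red k 2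
      push_cast
      rw [Q_succ, e3, e5,
        show (6 : ℤ) * ((k : ℤ) + 1) + 4 = 6 * (k : ℤ) + 10 by ring]
      rw [C_mul_T_eq ((Ym * Xm) ^ 2) (6 * (k : ℤ) + 10),
        C_mul_T_eq ((Ym * Xm) ^ 2) (6 * (k : ℤ) + 4)]
      simp only [mul_add, add_mul, sub_mul, mul_sub, mul_assoc, one_mul, mul_one]
      abel
    rw [hsplit, ih, Finset.sum_range_succ, step_core, add_assoc]

lemma sum_twin (k : ℕ) : IsTwin (∑ j ∈ Finset.range k, T (6 * (j : ℤ) + 3) * dlt) := by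
  induction k with
  | zero => simpa using twin_zero
  | succ k ih =>
    rw [Finset.sum_range_succ]
    refine ih.add ?_
    have h := dlt_twin.Tmul (2 * (k : ℤ) + 1)
    rw [show (3 : ℤ) * (2 * (k : ℤ) + 1) = 6 * (k : ℤ) + 3 by ring] at h
    exact h

/-- For every `k ≥ 0`, `Y⁻¹t⁻¹·[(I − Yt)·Q_{3k+1}(t)·Yt + (YX)^{3k+2}·t^{6k+4}]·(I − Xt)` is twin. -/
theorem stmt_9 (k : ℕ) :
    IsTwin (C Yinv * T (-1) *
      ((1 - C Ym * T 1) * Q (3 * k + 1) * (C Ym * T 1)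
        + C ((Ym * Xm) ^ (3 * k + 2)) * T (6 * k + 4)) *
      (1 - C Xm * T 1)) := by
  have h : (C Yinv * T (-1) *
      ((1 - C Ym * T 1) * Q (3 * k + 1) * (C Ym * T 1)
        + C ((Ym * Xm) ^ (3 * k + 2)) * T (6 * k + 4)) *
      (1 - C Xm * T 1)) = fP k := rfl
  rw [h, main_eq]
  exact (blk_twin _ _ _ _ _).add (sum_twin k)
end

section
/- The following identity of Laurent polynomials with 3×3 integer matrix coefficients holds: Y⁻¹t⁻¹·(I − Yt)·Q_{−3}(t)·Yt·(I − Xt) = I·t⁻⁶ − (X+Y)·t⁻⁵ − (X⁻¹+Y⁻¹)·t⁻⁴ − 2·XYX·t⁻³ − (X+Y)·t⁻² − (X⁻¹+Y⁻¹)·t⁻¹ + I. -/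
open LaurentPolynomial Finset

lemma key (A B : M3) (m n : ℤ) : (C A * T m) * (C B * T n) = C (A*B) * T (m+n) := by
  rw [mul_assoc, ← mul_assoc (T m) (C B), T_mul m (C B), mul_assoc (C B), ← T_add,
    ← mul_assoc, ← map_mul]

lemma key2 (A B : M3) (n : ℤ) : C A * (C B * T n) = C (A*B) * T n := by
  rw [← mul_assoc, ← map_mul]

lemma Lsub (f g : L) (a : ℤ) : (f - g).coeff a = f.coeff a - g.coeff a := Finsupp.sub_apply f.coeff g.coeff a
lemma Ladd (f g : L) (a : ℤ) : (f + g).coeff a = f.coeff a + g.coeff a := Finsupp.add_apply f.coeff g.coeff a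
lemma Lsingle (n a : ℤ) (M : M3) : (AddMonoidAlgebra.single n M : L).coeff a = if n = a then M else 0 :=
  Finsupp.single_apply

/-- `Y⁻¹t⁻¹·(I − Yt)·Q_{−3}(t)·Yt·(I − Xt)
    = I·t⁻⁶ − (X+Y)·t⁻⁵ − (X⁻¹+Y⁻¹)·t⁻⁴ − 2·XYX·t⁻³ − (X+Y)·t⁻² − (X⁻¹+Y⁻¹)·t⁻¹ + I`. -/
theorem stmt_16 :
    C Yinv * T (-1) * (1 - C Ym * T 1) * Q (-3) * (C Ym * T 1) * (1 - C Xm * T 1)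
    = T (-6) - C (Xm + Ym) * T (-5) - C (Xinv + Yinv) * T (-4)
      - 2 * C (Xm * Ym * Xm) * T (-3) - C (Xm + Ym) * T (-2)
      - C (Xinv + Yinv) * T (-1) + 1 := by
  have hQ : Q (-3) = C (Xinv*Yinv) * T (-2) + C ((Xinv*Yinv)^2) * T (-4)
      + C ((Xinv*Yinv)^3) * T (-6) := by
    simp [Q, Finset.sum_range_succ]
  have h1 : (1 : L) = C 1 * T 0 := by simp
  have h2 : (2 : L) * C (Xm * Ym * Xm) = C (2 * (Xm * Ym * Xm)) := by
    rw [← map_ofNat (C (R := M3)) 2, ← map_mul]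
  have hT6 : (T (-6) : L) = C 1 * T (-6) := by simp
  rw [hT6, hQ, h2, show (1 : L) = C 1 * T 0 from h1]
  simp only [mul_sub, sub_mul, mul_add, add_mul, key, key2]
  norm_num only
  simp only [← single_eq_C_mul_T]
  refine LaurentPolynomial.ext fun a => ?_
  simp only [Lsub, Ladd, Lsingle]
  split_ifs <;> decide
end
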